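/- Consider the labelled graph with vertices v₁, v₂, v₃, edges v₁ → v₂ and v₃ → v₂ both labelled a, and loops at v₁, v₂, v₃ each labelled b. Let B = {∅, {v₂}, {v₃}, {v₁,v₃}, {v₂,v₃}, {v₁,v₂,v₃}}. Then: (1) B is accommodating; (2) the labelled space (E, L, B) is weakly left-resolving; (3) it is regular; but (4) r({v₁,v₃} \ {v₃}, a) = {v₂} while r({v₁,v₃}, a) \ r({v₃}, a) = ∅, so the subtraction property r(A \ B, a) ⊆ r(A, a) \ r(B, a) fails. -/

import Mathlib

/-- A labelled graph: a directed graph with source, range maps and a labelling of edges. -/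
structure LabelledGraph (V E A : Type*) where
  src : E → V
  rng : E → V
  lab : E → A

namespace LabelledGraph

variable {V E A : Type*}

/-- `es` is a (nonempty, composable) path of edges. -/
def IsPath (G : LabelledGraph V E A) (es : List E) : Prop :=
  es ≠ [] ∧ es.Chain' (fun e f => G.rng e = G.src f)

/-- The relative range `r(S, α)`: ranges of paths labelled `α` whose source lies in `S`. -/
def relRange (G : LabelledGraph V E A) (S : Set V) (α : List A) : Set V :=
  { w | ∃ es : List E, G.IsPath es ∧ es.map G.lab = α ∧
        (∀ e ∈ es.head?, G.src e ∈ S) ∧ ∃ e ∈ es.getLast?, G.rng e = w }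

/-- `α` is a labelled path if it is the label of some path in the graph. -/
def IsLabelledPath (G : LabelledGraph V E A) (α : List A) : Prop :=
  (G.relRange Set.univ α).Nonempty

/-- The graph is left-resolving: the labelling is injective on edges into each vertex. -/
def LeftResolving (G : LabelledGraph V E A) : Prop :=
  ∀ e f : E, G.rng e = G.rng f → G.lab e = G.lab f → e = f

/-- `L(S E¹)`, the set of labels of edges emitted from `S`. -/
def labelsFrom (G : LabelledGraph V E A) (S : Set V) : Set A :=
  G.lab '' (G.src ⁻¹' S)

/-- A sink: a vertex emitting no edges. -/
def IsSink (G : LabelledGraph V E A) (v : V) : Prop := ∀ e : E, G.src e ≠ v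

/-- `𝓑` is accommodating for `G`. -/
def Accommodating (G : LabelledGraph V E A) (𝓑 : Set (Set V)) : Prop :=
  (∀ S ∈ 𝓑, ∀ α : List A, G.IsLabelledPath α → G.relRange S α ∈ 𝓑) ∧
  (∀ α : List A, G.IsLabelledPath α → G.relRange Set.univ α ∈ 𝓑) ∧
  (∀ S ∈ 𝓑, ∀ T ∈ 𝓑, S ∩ T ∈ 𝓑) ∧
  (∀ S ∈ 𝓑, ∀ T ∈ 𝓑, S ∪ T ∈ 𝓑)

/-- The labelled space `(E, L, 𝓑)` is weakly left-resolving. -/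
def WeaklyLeftResolving (G : LabelledGraph V E A) (𝓑 : Set (Set V)) : Prop :=
  ∀ S ∈ 𝓑, ∀ T ∈ 𝓑, ∀ α : List A, G.IsLabelledPath α →
    G.relRange (S ∩ T) α = G.relRange S α ∩ G.relRange T α

/-- The labelled space `(E, L, 𝓑)` is regular. -/
def Regular (G : LabelledGraph V E A) (𝓑 : Set (Set V)) : Prop :=
  ∀ S ∈ 𝓑, ∀ T ∈ 𝓑,
    G.labelsFrom S = G.labelsFrom T → (G.labelsFrom S).Finite →
    (∀ v ∈ S, ¬ G.IsSink v) → (∀ v ∈ T, ¬ G.IsSink v) →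
    (∀ a ∈ G.labelsFrom S, G.relRange S [a] = G.relRange T [a]) →
    S = T

section
variable (G : LabelledGraph V E A)

lemma relRange_nil (S : Set V) : G.relRange S ([] : List A) = ∅ := by
  ext w
  simp only [relRange, Set.mem_setOf_eq, Set.mem_empty_iff_false, iff_false]
  rintro ⟨es, hp, hmap, -, -⟩
  exact hp.1 (List.map_eq_nil_iff.mp hmap)

lemma relRange_singleton (S : Set V) (c : A) :
    G.relRange S [c] = {w | ∃ e, G.lab e = c ∧ G.src e ∈ S ∧ G.rng e = w} := by
  ext w
  constructor
  · rintro ⟨es, hp, hmap, hhead, e, hlast, hrng⟩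
    match es, hmap with
    | [e'], hmap =>
      simp only [List.map_cons, List.map_nil, List.cons.injEq] at hmap
      simp only [List.head?_cons, Option.mem_def, Option.some.injEq] at hhead
      simp only [List.getLast?_singleton, Option.mem_def, Option.some.injEq] at hlast
      subst hlast
      exact ⟨e', hmap.1, hhead e' rfl, hrng⟩
  · rintro ⟨e, hlab, hsrc, hrng⟩
    refine ⟨[e], ⟨by simp, List.isChain_singleton _⟩, by simp [hlab], ?_, e, by simp, hrng⟩
    simpa using hsrc

lemma relRange_cons (S : Set V) (c : A) (α : List A) (hα : α ≠ []) :
    G.relRange S (c :: α) = G.relRange (G.relRange S [c]) α := by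
  ext w
  constructor
  · rintro ⟨es, ⟨hne, hch⟩, hmap, hhead, e, hlast, hrng⟩
    match es with
    | [] => exact absurd rfl hne
    | [e₀] =>
      simp only [List.map_cons, List.map_nil, List.cons.injEq] at hmap
      exact absurd hmap.2.symm hα
    | e₀ :: f :: es'' =>
      simp only [List.map_cons, List.cons.injEq] at hmap
      obtain ⟨hc, hmap'⟩ := hmap
      have hch' := List.isChain_cons_cons.mp hch
      refine ⟨f :: es'', ⟨by simp, hch'.2⟩, by simpa using hmap', ?_, e, ?_, hrng⟩
      · intro g hg
        simp only [List.head?_cons, Option.mem_def, Option.some.injEq] at hg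
        subst hg
        refine ⟨[e₀], ⟨by simp, List.isChain_singleton _⟩, by simp [hc], ?_, e₀, by simp, hch'.1⟩
        · intro g hg
          simp only [List.head?_cons, Option.mem_def, Option.some.injEq] at hg
          subst hg
          exact hhead e₀ (by simp)
      · rwa [List.getLast?_cons_cons] at hlast
  · rintro ⟨es', ⟨hne', hch'⟩, hmap', hhead', e, hlast', hrng⟩
    match es' with
    | [] => exact absurd rfl hne'
    | f :: es'' =>
      obtain ⟨esₒ, ⟨hneₒ, -⟩, hmapₒ, hheadₒ, e₀, hlastₒ, hrngₒ⟩ := hhead' f (by simp)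
      match esₒ, hmapₒ with
      | [e₀'], hmapₒ =>
        simp only [List.map_cons, List.map_nil, List.cons.injEq] at hmapₒ
        simp only [List.getLast?_singleton, Option.mem_def, Option.some.injEq] at hlastₒ
        subst hlastₒ
        refine ⟨e₀' :: f :: es'', ⟨by simp, List.isChain_cons_cons.mpr ⟨hrngₒ, hch'⟩⟩,
          by simp [hmapₒ.1, hmap'], ?_, e, ?_, hrng⟩
        · intro g hg
          simp only [List.head?_cons, Option.mem_def, Option.some.injEq] at hg
          subst hg
          exact hheadₒ e₀' (by simp)
        · rwa [List.getLast?_cons_cons]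


end

end LabelledGraph

/-- The labelled graph with vertices `v₁ = 0`, `v₂ = 1`, `v₃ = 2`, edges `v₁ → v₂` and
`v₃ → v₂` labelled `a = true`, and loops at each vertex labelled `b = false`. -/
def exGraph : LabelledGraph (Fin 3) (Fin 5) Bool where
  src := ![0, 2, 0, 1, 2]
  rng := ![1, 1, 0, 1, 2]
  lab := ![true, true, false, false, false]

def exB : Set (Set (Fin 3)) := {∅, {1}, {2}, {0, 2}, {1, 2}, {0, 1, 2}}

open Classical in
noncomputable def eStep (S : Set (Fin 3)) : Bool → Set (Fin 3)
  | false => S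
  | true => if 0 ∈ S ∨ 2 ∈ S then {1} else ∅

lemma relRange_single (S : Set (Fin 3)) (c : Bool) :
    exGraph.relRange S [c] = eStep S c := by
  rw [LabelledGraph.relRange_singleton]
  cases c with
  | false =>
    ext w
    simp only [eStep, Set.mem_setOf_eq]
    constructor
    · rintro ⟨e, h1, h2, rfl⟩
      fin_cases e <;> simp_all [exGraph]
    · intro hw
      fin_cases w
      · exact ⟨2, by simp [exGraph], by simpa [exGraph] using hw, by simp [exGraph]⟩
      · exact ⟨3, by simp [exGraph], by simpa [exGraph] using hw, by simp [exGraph]⟩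
      · exact ⟨4, by simp [exGraph], by simpa [exGraph] using hw, by simp [exGraph]⟩
  | true =>
    ext w
    simp only [eStep]
    split_ifs with h
    · simp only [Set.mem_setOf_eq, Set.mem_singleton_iff]
      constructor
      · rintro ⟨e, h1, h2, rfl⟩
        fin_cases e <;> simp_all [exGraph]
      · rintro rfl
        rcases h with h | h
        · exact ⟨0, by simp [exGraph], by simpa [exGraph] using h, by simp [exGraph]⟩
        · exact ⟨1, by simp [exGraph], by simpa [exGraph] using h, by simp [exGraph]⟩
    · simp only [Set.mem_setOf_eq, Set.mem_empty_iff_false, iff_false]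
      rintro ⟨e, h1, h2, rfl⟩
      fin_cases e <;> simp_all [exGraph]

open Classical in
noncomputable def Rfun (S : Set (Fin 3)) (α : List Bool) : Set (Fin 3) :=
  if α.count true = 0 then S
  else if α.count true = 1 ∧ (0 ∈ S ∨ 2 ∈ S) then {1} else ∅

lemma eStep_not_mem (S : Set (Fin 3)) : ¬ (0 ∈ eStep S true ∨ 2 ∈ eStep S true) := by
  simp only [eStep]
  split_ifs <;> simp

lemma Rfun_single (S : Set (Fin 3)) (c : Bool) : Rfun S [c] = eStep S c := by
  cases c with
  | false => simp [Rfun, eStep]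
  | true =>
    rw [Rfun, eStep, show List.count true [true] = 1 from rfl]
    by_cases hS : 0 ∈ S ∨ 2 ∈ S <;> simp [hS]

lemma Rfun_step (S : Set (Fin 3)) (α : List Bool) (c : Bool) :
    Rfun (eStep S c) α = Rfun S (c :: α) := by
  cases c with
  | false =>
    rw [Rfun, Rfun, show List.count true (false :: α) = α.count true by simp, eStep]
  | true =>
    have hn := eStep_not_mem S
    rw [Rfun, Rfun, show List.count true (true :: α) = α.count true + 1 by simp]
    by_cases h0 : α.count true = 0
    · rw [h0]
      by_cases hS : 0 ∈ S ∨ 2 ∈ S <;> simp [eStep, hS]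
    · rw [if_neg h0, if_neg (fun hc => hn hc.2),
        if_neg (show ¬(α.count true + 1 = 0) by omega),
        if_neg (show ¬(α.count true + 1 = 1 ∧ (0 ∈ S ∨ 2 ∈ S)) from
          fun hc => absurd hc.1 (by omega))]

lemma relRange_eq_Rfun : ∀ (α : List Bool), α ≠ [] → ∀ S : Set (Fin 3),
    exGraph.relRange S α = Rfun S α := by
  intro α
  induction α with
  | nil => intro h; exact absurd rfl h
  | cons c α ih =>
    intro _ S
    rcases eq_or_ne α [] with rfl | hα
    · rw [relRange_single, Rfun_single]
    · rw [LabelledGraph.relRange_cons _ _ _ _ hα, relRange_single, ih hα, Rfun_step]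

lemma labelled_ne_nil {V E A : Type*} (G : LabelledGraph V E A) (α : List A)
    (h : G.IsLabelledPath α) : α ≠ [] := by
  rintro rfl
  rw [LabelledGraph.IsLabelledPath, LabelledGraph.relRange_nil] at h
  exact Set.not_nonempty_empty h

lemma mem_exB_cases {S : Set (Fin 3)} (hS : S ∈ exB) :
    S = ∅ ∨ S = {1} ∨ S = {2} ∨ S = {0, 2} ∨ S = {1, 2} ∨ S = {0, 1, 2} := by
  simpa only [exB, Set.mem_insert_iff, Set.mem_singleton_iff] using hS

lemma key {S : Set (Fin 3)} (hS : S ∈ exB) : (0 ∈ S ∨ 2 ∈ S) ↔ 2 ∈ S := by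
  rcases mem_exB_cases hS with rfl | rfl | rfl | rfl | rfl | rfl <;>
    simp only [Set.mem_empty_iff_false, Set.mem_singleton_iff, Set.mem_insert_iff] <;> decide

lemma inter_mem_exB {S T : Set (Fin 3)} (hS : S ∈ exB) (hT : T ∈ exB) : S ∩ T ∈ exB := by
  rcases mem_exB_cases hS with rfl | rfl | rfl | rfl | rfl | rfl <;>
    rcases mem_exB_cases hT with rfl | rfl | rfl | rfl | rfl | rfl <;>
    · simp only [exB, Set.mem_insert_iff, Set.mem_singleton_iff, Set.ext_iff,
        Set.mem_inter_iff, Set.mem_union, Set.mem_empty_iff_false]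
      decide

lemma union_mem_exB {S T : Set (Fin 3)} (hS : S ∈ exB) (hT : T ∈ exB) : S ∪ T ∈ exB := by
  rcases mem_exB_cases hS with rfl | rfl | rfl | rfl | rfl | rfl <;>
    rcases mem_exB_cases hT with rfl | rfl | rfl | rfl | rfl | rfl <;>
    · simp only [exB, Set.mem_insert_iff, Set.mem_singleton_iff, Set.ext_iff,
        Set.mem_inter_iff, Set.mem_union, Set.mem_empty_iff_false]
      decide

lemma empty_mem_exB : (∅ : Set (Fin 3)) ∈ exB := by
  simp only [exB, Set.mem_insert_iff, Set.mem_singleton_iff]; tauto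

lemma one_mem_exB : ({1} : Set (Fin 3)) ∈ exB := by
  simp only [exB, Set.mem_insert_iff, Set.mem_singleton_iff]; tauto

lemma univ_mem_exB : (Set.univ : Set (Fin 3)) ∈ exB := by
  simp only [exB, Set.mem_insert_iff, Set.mem_singleton_iff, Set.ext_iff,
    Set.mem_insert_iff, Set.mem_singleton_iff, Set.mem_empty_iff_false, Set.mem_univ]
  decide

lemma false_mem_labels {S : Set (Fin 3)} (hS : S ∈ exB) (hne : S ≠ ∅) :
    false ∈ exGraph.labelsFrom S := by
  rcases mem_exB_cases hS with rfl | rfl | rfl | rfl | rfl | rfl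
  · exact absurd rfl hne
  · exact ⟨3, by simp [exGraph], by simp [exGraph]⟩
  · exact ⟨4, by simp [exGraph], by simp [exGraph]⟩
  · exact ⟨4, by simp [exGraph], by simp [exGraph]⟩
  · exact ⟨3, by simp [exGraph], by simp [exGraph]⟩
  · exact ⟨3, by simp [exGraph], by simp [exGraph]⟩


theorem stmt17 :
    exGraph.Accommodating exB ∧
    exGraph.WeaklyLeftResolving exB ∧
    exGraph.Regular exB ∧
    exGraph.relRange (({0, 2} : Set (Fin 3)) \ {2}) [true] = {1} ∧
    exGraph.relRange {0, 2} [true] \ exGraph.relRange {2} [true] = ∅ := by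
  refine ⟨⟨?_, ?_, fun S hS T hT => inter_mem_exB hS hT, fun S hS T hT => union_mem_exB hS hT⟩,
    ?_, ?_, ?_, ?_⟩
  · -- relative ranges stay in exB
    intro S hS α hlp
    rw [relRange_eq_Rfun α (labelled_ne_nil _ _ hlp), Rfun]
    split_ifs
    · exact hS
    · exact one_mem_exB
    · exact empty_mem_exB
  · intro α hlp
    rw [relRange_eq_Rfun α (labelled_ne_nil _ _ hlp), Rfun]
    split_ifs
    · exact univ_mem_exB
    · exact one_mem_exB
    · exact empty_mem_exB
  · -- weakly left-resolving
    intro S hS T hT α hlp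
    have hne := labelled_ne_nil _ _ hlp
    rw [relRange_eq_Rfun α hne, relRange_eq_Rfun α hne, relRange_eq_Rfun α hne]
    by_cases h0 : α.count true = 0
    · simp [Rfun, h0]
    by_cases h1 : α.count true = 1
    · have hST := inter_mem_exB hS hT
      rw [Rfun, Rfun, Rfun, if_neg h0, if_neg h0, if_neg h0]
      by_cases h2S : 2 ∈ S <;> by_cases h2T : 2 ∈ T
      · rw [if_pos ⟨h1, (key hST).mpr ⟨h2S, h2T⟩⟩, if_pos ⟨h1, (key hS).mpr h2S⟩,
          if_pos ⟨h1, (key hT).mpr h2T⟩]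
        simp
      · rw [if_neg (fun hc => h2T ((key hST).mp hc.2).2), if_pos ⟨h1, (key hS).mpr h2S⟩,
          if_neg (fun hc => h2T ((key hT).mp hc.2))]
        simp
      · rw [if_neg (fun hc => h2S ((key hST).mp hc.2).1), if_neg (fun hc => h2S ((key hS).mp hc.2))]
        simp
      · rw [if_neg (fun hc => h2S ((key hST).mp hc.2).1), if_neg (fun hc => h2S ((key hS).mp hc.2))]
        simp
    · simp [Rfun, h0, h1]
  · -- regular
    intro S hS T hT hlab _ _ _ h5
    by_cases hSe : S = ∅
    · subst hSe
      by_contra hTe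
      have hf : false ∈ exGraph.labelsFrom T := false_mem_labels hT (fun h => hTe h.symm)
      rw [← hlab] at hf
      obtain ⟨e, he, -⟩ := hf
      exact he
    · have hf : false ∈ exGraph.labelsFrom S := false_mem_labels hS hSe
      have := h5 false hf
      rw [relRange_single, relRange_single] at this
      exact this
  · rw [relRange_single, eStep,
      if_pos (Or.inl (show (0 : Fin 3) ∈ ({0,2} : Set (Fin 3)) \ {2} by
        constructor <;> simp))]
  · rw [relRange_single, relRange_single, eStep, eStep,
      if_pos (Or.inl (show (0 : Fin 3) ∈ ({0,2} : Set (Fin 3)) by simp)),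
      if_pos (Or.inr (show (2 : Fin 3) ∈ ({2} : Set (Fin 3)) by simp))]
    simp
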